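/- Work with formal power series over ℝ. Let E ∈ ℝ[[x]] satisfy E = 2·exp( x·E² / (1 + x·E) ) − 1 (so E has constant term 1), and let D ∈ ℝ[[x, t]] satisfy D = (1 + t)·exp( x·E·D / (1 + x·E) ) − 1. Suppose D₂, S₂ ∈ ℝ[[x, t]] satisfy D₂ = (1 + E)·S₂ and S₂ = x·(D₂ − S₂)·E + x·( D − x·E·D/(1 + x·E) )·D + x·( E − x·E²/(1 + x·E) )·D₂. Then (1 − 2·x·E² − x²·E³)·S₂ = x·D² and (1 − 2·x·E² − x²·E³)·D₂ = x·(1 + E)·D²; in particular, since 1 − 2·x·E² − x²·E³ has constant term 1 and is a unit, D₂ = x·(1 + E)·D² / (1 − 2·x·E² − x²·E³) and S₂ = x·D² / (1 − 2·x·E² − x²·E³). -/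

import Mathlib

/-- The formal exponential of a multivariate formal power series.  For a series `S`
with zero constant term this agrees with `Σ_{n≥0} Sⁿ/n!`, since the coefficient of a
monomial `m` in `Sⁿ` vanishes whenever `n` exceeds the total degree of `m`. -/
noncomputable def formalExp {σ : Type*} (S : MvPowerSeries σ ℝ) : MvPowerSeries σ ℝ :=
  fun m => ∑ n ∈ Finset.range ((m.sum fun _ e => e) + 1),
    MvPowerSeries.coeff m (S ^ n) / (n.factorial : ℝ)

/-- The combinatorial system for SP networks carrying an additional marked non-pole
vertex (`D₂`, `S₂`, after setting the first-pole variable `w` equal to `1`), and its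
solution: `D₂ = x(1+E)D²/(1−2xE²−x²E³)` and `S₂ = xD²/(1−2xE²−x²E³)`, in `ℝ[[x,t]]`. -/
theorem sp_network_marked_vertex_system
    (x t : MvPowerSeries (Fin 2) ℝ)
    (hx : x = MvPowerSeries.X 0) (ht : t = MvPowerSeries.X 1)
    (E D D₂ S₂ : MvPowerSeries (Fin 2) ℝ)
    (hE : E = 2 * formalExp (x * E ^ 2 * (1 + x * E)⁻¹) - 1)
    (hD : D = (1 + t) * formalExp (x * E * D * (1 + x * E)⁻¹) - 1)
    (hD₂ : D₂ = (1 + E) * S₂)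
    (hS₂ : S₂ = x * (D₂ - S₂) * E + x * (D - x * E * D * (1 + x * E)⁻¹) * D +
      x * (E - x * E ^ 2 * (1 + x * E)⁻¹) * D₂) :
    (1 - 2 * x * E ^ 2 - x ^ 2 * E ^ 3) * S₂ = x * D ^ 2 ∧
    (1 - 2 * x * E ^ 2 - x ^ 2 * E ^ 3) * D₂ = x * (1 + E) * D ^ 2 ∧
    IsUnit (1 - 2 * x * E ^ 2 - x ^ 2 * E ^ 3) ∧
    D₂ = x * (1 + E) * D ^ 2 * (1 - 2 * x * E ^ 2 - x ^ 2 * E ^ 3)⁻¹ ∧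
    S₂ = x * D ^ 2 * (1 - 2 * x * E ^ 2 - x ^ 2 * E ^ 3)⁻¹ := by
  have hxc : MvPowerSeries.constantCoeff x = 0 := by
    simp [hx]
  have hA : (1 + x * E) * (1 + x * E)⁻¹ = 1 := by
    apply MvPowerSeries.mul_inv_cancel
    simp [hxc]
  set Q := 1 - 2 * x * E ^ 2 - x ^ 2 * E ^ 3 with hQ
  have hQc : MvPowerSeries.constantCoeff Q ≠ 0 := by
    simp [hQ, hxc]
  have hQinv : Q * Q⁻¹ = 1 := MvPowerSeries.mul_inv_cancel _ hQc
  have h1 : Q * S₂ = x * D ^ 2 := by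
    rw [hD₂] at hS₂
    linear_combination (1 + x * E) * hS₂ +
      (-(x ^ 2 * E * D ^ 2) - x ^ 2 * E ^ 2 * (1 + E) * S₂) * hA
  have h2 : Q * D₂ = x * (1 + E) * D ^ 2 := by
    rw [hD₂]; linear_combination (1 + E) * h1
  refine ⟨h1, h2, IsUnit.of_mul_eq_one _ hQinv, ?_, ?_⟩
  · linear_combination Q⁻¹ * h2 - D₂ * hQinv
  · linear_combination Q⁻¹ * h1 - S₂ * hQinv
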